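/- For any two compatible strings s and t of length n, if α is the maximum number of occurrences of any single symbol in s, then d(s,t) ≤ 2(n − α). -/

import Mathlib

/-- Prefix reversal (flip) of the first `i` symbols of `s`. -/
def pflip (i : ℕ) (s : List ℕ) : List ℕ := (s.take i).reverse ++ s.drop i

/-- One flip step: `t` is obtained from `s` by some flip `f^(i)` with `1 ≤ i ≤ |s|`. -/
def FlipStep (s t : List ℕ) : Prop := ∃ i, 1 ≤ i ∧ i ≤ s.length ∧ t = pflip i s

/-- `ReachIn m s t`: `t` can be obtained from `s` by exactly `m` flips. -/
def ReachIn : ℕ → List ℕ → List ℕ → Prop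
  | 0 => fun s t => s = t
  | (m+1) => fun s t => ∃ u, FlipStep s u ∧ ReachIn m u t

/-- Flip distance: minimum number of flips transforming `s` into `t`. -/
noncomputable def flipDist (s t : List ℕ) : ℕ := sInf {m | ReachIn m s t}

/-- Two strings are compatible if every symbol occurs equally often in both. -/
def Compatible (s t : List ℕ) : Prop := ∀ a, s.count a = t.count a

/-- A string is fully `k`-ary if the set of symbols occurring in it is exactly `{0,…,k-1}`. -/
def FullyKary (k : ℕ) (s : List ℕ) : Prop := ∀ a, a ∈ s ↔ a < k

/-- A string is normalized if no two adjacent symbols are equal. -/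
def Normalized (s : List ℕ) : Prop := s.Chain' (· ≠ ·)

/-- A string is grouped if the occurrences of each symbol are consecutive. -/
def Grouped (s : List ℕ) : Prop :=
  ∀ i j l : Fin s.length, i < j → j < l → s.get i = s.get l → s.get j = s.get i

/-- Flip grouping distance: minimum number of flips transforming `s` into some grouped string. -/
noncomputable def groupDist (s : List ℕ) : ℕ := sInf {m | ∃ t, Grouped t ∧ ReachIn m s t}

/-- Flip sorting distance: flip distance from `s` to its non-descending rearrangement `I(s)`. -/
noncomputable def sortDist (s : List ℕ) : ℕ := flipDist s (s.insertionSort (· ≤ ·))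

/-- `rep w m` is the concatenation of `m` copies of the string `w`. -/
def rep (w : List ℕ) (m : ℕ) : List ℕ := (List.replicate m w).flatten

lemma pflip_length (i : ℕ) (s : List ℕ) : (pflip i s).length = s.length := by
  simp [pflip]; omega

lemma pflip_pflip (i : ℕ) (s : List ℕ) (h : i ≤ s.length) : pflip i (pflip i s) = s := by
  have h1 : (s.take i).reverse.length = i := by simp; omega
  unfold pflip
  rw [List.take_left' h1, List.drop_left' h1, List.reverse_reverse, List.take_append_drop]

lemma FlipStep.symm' {s t : List ℕ} (h : FlipStep s t) : FlipStep t s := by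
  obtain ⟨i, h1, h2, rfl⟩ := h
  exact ⟨i, h1, by rw [pflip_length]; exact h2, (pflip_pflip i s h2).symm⟩

lemma ReachIn_trans {m k : ℕ} {s u t : List ℕ} (h1 : ReachIn m s u) (h2 : ReachIn k u t) :
    ReachIn (m + k) s t := by
  induction m generalizing s with
  | zero => cases h1; simpa using h2
  | succ m ih =>
    obtain ⟨w, hw, hr⟩ := h1
    rw [show m + 1 + k = (m + k) + 1 from by omega]
    exact ⟨w, hw, ih hr⟩

lemma ReachIn_snoc {m : ℕ} {s u t : List ℕ} (h1 : ReachIn m s u) (h2 : FlipStep u t) :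
    ReachIn (m + 1) s t :=
  ReachIn_trans h1 ⟨t, h2, rfl⟩

lemma ReachIn.symm' {m : ℕ} {s t : List ℕ} (h : ReachIn m s t) : ReachIn m t s := by
  induction m generalizing s t with
  | zero => exact h.symm
  | succ m ih =>
    obtain ⟨u, hu, hr⟩ := h
    exact ReachIn_snoc (ih hr) hu.symm'

lemma FlipStep_append {v u : List ℕ} (r : List ℕ) (h : FlipStep v u) :
    FlipStep (v ++ r) (u ++ r) := by
  obtain ⟨i, h1, h2, rfl⟩ := h
  refine ⟨i, h1, by simp; omega, ?_⟩
  unfold pflip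
  rw [List.take_append_of_le_length h2, List.drop_append_of_le_length h2, List.append_assoc]

lemma ReachIn_append {m : ℕ} {v w : List ℕ} (r : List ℕ) (h : ReachIn m v w) :
    ReachIn m (v ++ r) (w ++ r) := by
  induction m generalizing v with
  | zero => cases h; rfl
  | succ m ih =>
    obtain ⟨u, hu, hr⟩ := h
    exact ⟨u ++ r, FlipStep_append r hu, ih hr⟩

lemma pflip_length_self (l : List ℕ) : pflip l.length l = l.reverse := by
  simp [pflip]

lemma two_flips (s₁ s₂ : List ℕ) (x : ℕ) :
    ReachIn 2 (s₁ ++ x :: s₂) ((s₂.reverse ++ s₁) ++ [x]) := by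
  have h1 : (s₁ ++ [x]).length = s₁.length + 1 := by simp
  have hstep1 : pflip (s₁.length + 1) (s₁ ++ x :: s₂) = x :: (s₁.reverse ++ s₂) := by
    unfold pflip
    rw [show s₁ ++ x :: s₂ = (s₁ ++ [x]) ++ s₂ by simp]
    rw [List.take_left' h1, List.drop_left' h1]
    simp
  refine ⟨x :: (s₁.reverse ++ s₂), ⟨s₁.length + 1, by omega, by simp only [List.length_append, List.length_cons]; omega, hstep1.symm⟩,
    (s₂.reverse ++ s₁) ++ [x],
    ⟨(x :: (s₁.reverse ++ s₂)).length, by simp, le_refl _, ?_⟩, rfl⟩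
  rw [pflip_length_self]
  simp

lemma two_flips_perm (l₁ l₂ : List ℕ) (x : ℕ) :
    (l₁ ++ x :: l₂).Perm ((l₂.reverse ++ l₁) ++ [x]) := by
  have hmid : (l₁ ++ x :: l₂).Perm (x :: (l₁ ++ l₂)) := List.perm_middle
  have hw1 : (l₂.reverse ++ l₁).Perm (l₁ ++ l₂) :=
    ((List.reverse_perm l₂).append_right l₁).trans List.perm_append_comm
  have h2 : ((l₂.reverse ++ l₁) ++ [x]).Perm (x :: (l₁ ++ l₂)) :=
    List.perm_append_comm.trans (hw1.cons x)
  exact hmid.trans h2.symm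

lemma main_lemma (a : ℕ) : ∀ n (s t : List ℕ), s.length = n → s.Perm t →
    ∃ m, ReachIn m s t ∧ m ≤ 2 * (s.length - s.count a) := by
  intro n
  induction n with
  | zero =>
    intro s t hlen hperm
    have hs : s = [] := List.length_eq_zero_iff.mp hlen
    subst hs
    have ht : t = [] := List.Perm.eq_nil hperm.symm
    exact ⟨0, by simp [ht, ReachIn], by omega⟩
  | succ n ih =>
    intro s t hlen hperm
    have htlen : t.length = n + 1 := by rw [← hperm.length_eq, hlen]
    obtain ⟨t'', z, rfl⟩ : ∃ t'' z, t = t'' ++ [z] := by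
      rcases List.eq_nil_or_concat t with h | ⟨L, b, h⟩
      · simp [h] at htlen
      · exact ⟨L, b, by simp [h]⟩
    obtain ⟨v, y, rfl⟩ : ∃ v y, s = v ++ [y] := by
      rcases List.eq_nil_or_concat s with h | ⟨L, b, h⟩
      · simp [h] at hlen
      · exact ⟨L, b, by simp [h]⟩
    have hvlen : v.length = n := by simp at hlen; omega
    have hcle : v.count a ≤ v.length := List.count_le_length (a := a) (l := v)
    by_cases hyz : y = z
    · -- strip equal last symbols
      subst hyz
      have hvw : v.Perm t'' := (List.perm_append_right_iff [y]).mp hperm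
      obtain ⟨m, hr, hb⟩ := ih v t'' hvlen hvw
      refine ⟨m, ReachIn_append [y] hr, le_trans hb ?_⟩
      have h0 : (v ++ [y]).count a = v.count a + List.count a [y] := List.count_append (a := a) (l₁ := v) (l₂ := [y])
      have h1 : List.count a [y] ≤ 1 := by
        have := List.count_le_length (a := a) (l := [y]); simpa using this
      simp only [List.length_append, List.length_singleton]
      omega
    by_cases hza : z = a
    · -- z = a, y ≠ a : two flips on t to bring y to its end
      have hya : y ≠ a := fun h => hyz (h.trans hza.symm)
      have hyt : y ∈ t'' ++ [z] := hperm.subset (by simp)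
      obtain ⟨t₁, t₂, ht⟩ := List.append_of_mem hyt
      have h2t : ReachIn 2 (t'' ++ [z]) ((t₂.reverse ++ t₁) ++ [y]) := ht ▸ two_flips t₁ t₂ y
      have hperm2 : (v ++ [y]).Perm ((t₂.reverse ++ t₁) ++ [y]) :=
        hperm.trans (ht ▸ two_flips_perm t₁ t₂ y)
      have hvw : v.Perm (t₂.reverse ++ t₁) := (List.perm_append_right_iff [y]).mp hperm2
      obtain ⟨m, hr, hb⟩ := ih v (t₂.reverse ++ t₁) hvlen hvw
      refine ⟨m + 2, ReachIn_trans (ReachIn_append [y] hr) h2t.symm', ?_⟩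
      have hy0 : List.count a [y] = 0 := List.count_eq_zero.mpr (by simp [Ne.symm hya])
      have hcv : (v ++ [y]).count a = v.count a := by
        rw [List.count_append, hy0, Nat.add_zero]
      rw [hcv]
      simp only [List.length_append, List.length_singleton]
      omega
    · -- z ≠ a : two flips on s to bring z to its end
      have hzs : z ∈ v ++ [y] := hperm.symm.subset (by simp)
      obtain ⟨s₁, s₂, hsplit⟩ := List.append_of_mem hzs
      have h2s : ReachIn 2 (v ++ [y]) ((s₂.reverse ++ s₁) ++ [z]) := hsplit ▸ two_flips s₁ s₂ z
      have hperm2 : ((s₂.reverse ++ s₁) ++ [z]).Perm (t'' ++ [z]) :=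
        ((hsplit ▸ two_flips_perm s₁ s₂ z).symm).trans hperm
      have hperm3 : (s₂.reverse ++ s₁).Perm t'' := (List.perm_append_right_iff [z]).mp hperm2
      have hv'len : (s₂.reverse ++ s₁).length = n := by
        have h9 := congrArg List.length hsplit
        simp at h9 ⊢
        omega
      obtain ⟨m, hr, hb⟩ := ih (s₂.reverse ++ s₁) t'' hv'len hperm3
      refine ⟨2 + m, ReachIn_trans h2s (ReachIn_append [z] hr), ?_⟩
      have hz0 : List.count a [z] = 0 := List.count_eq_zero.mpr (by simp [Ne.symm hza])
      have hcv : (v ++ [y]).count a = (s₂.reverse ++ s₁).count a := by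
        have h9 := (List.perm_iff_count.mp hperm2) a
        have h10 := (List.perm_iff_count.mp hperm) a
        rw [List.count_append] at h9
        omega
      have hc'le : (s₂.reverse ++ s₁).count a ≤ (s₂.reverse ++ s₁).length :=
        List.count_le_length (a := a)
      rw [hcv]
      simp only [List.length_append, List.length_singleton]
      omega

theorem distance_upper_bound_max_multiplicity (n α : ℕ) (s t : List ℕ)
    (hlen : s.length = n) (hcomp : Compatible s t)
    (hmax : ∃ a, s.count a = α) (hub : ∀ a, s.count a ≤ α) :
    flipDist s t ≤ 2 * (n - α) := by
  obtain ⟨a, ha⟩ := hmax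
  have hperm : s.Perm t := List.perm_iff_count.mpr hcomp
  obtain ⟨m, hr, hb⟩ := main_lemma a s.length s t rfl hperm
  calc flipDist s t ≤ m := Nat.sInf_le hr
  _ ≤ 2 * (n - α) := by rw [← hlen, ← ha]; exact hb
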